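/- Let H be a Hopf algebra over a field k with invertible antipode, H* its restricted dual, and define the pairing (h, x) := ⟨γ⁻¹(h), x⟩ for h ∈ H*, x ∈ H, where ⟨·,·⟩ is the canonical Hopf pairing. Then this pairing is invariant under the simultaneous H-actions: for all u ∈ H, (u ▷ h, x) paired suitably satisfies (u⁽¹⁾ ▷ h, u⁽²⁾ ▷_{ad} x) = ε(u)(h, x), where ▷ is the action x ▷ λ = x⁽²⁾ ⇀ λ ↼ γ(x⁽¹⁾) on H* and ▷_{ad} is the adjoint action u ▷_{ad} x = u⁽¹⁾ x γ(u⁽²⁾) on H. -/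

import Mathlib

/-!
STATEMENT 19: Let `H` be a Hopf algebra with invertible antipode and `K = H*` its
restricted dual (an abstract Hopf algebra with a nondegenerate Hopf pairing to `H`).
Define `(h, x) := ⟨γ⁻¹(h), x⟩` for `h ∈ K`, `x ∈ H`.  Then this pairing is invariant
under the diagonal `H`-action combining the action `x ▷ λ = x⁽²⁾ ⇀ λ ↼ γ(x⁽¹⁾)` on
`K` and the adjoint action on `H`:
`(u⁽¹⁾ ▷ h, u⁽²⁾ ▷_ad x) = ε(u)(h, x)`, as an equality of linear maps
`H ⊗ (K ⊗ H) → k`.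
-/

open TensorProduct LinearMap

noncomputable section

variable (k : Type*) [Field k]
variable (H : Type*) [Ring H] [HopfAlgebra k H]
variable (K : Type*) [Ring K] [HopfAlgebra k K]

/-- The left adjoint action of `H` on itself. -/
def adjAction : H ⊗[k] H →ₗ[k] H :=
  (LinearMap.mul' k H) ∘ₗ
    (LinearMap.lTensor H ((LinearMap.mul' k H) ∘ₗ
      (LinearMap.lTensor H (HopfAlgebra.antipode (R := k))))) ∘ₗ
    (LinearMap.lTensor H (TensorProduct.comm k H H).toLinearMap) ∘ₗ
    (TensorProduct.assoc k H H H).toLinearMap ∘ₗ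
    (LinearMap.rTensor H (Coalgebra.comul (R := k)))

variable {H K}

/-- The action `x ▷ λ = x⁽²⁾ ⇀ λ ↼ γ(x⁽¹⁾)` of `H` on `K = H*`, built from the
coregular actions `actL (x ⊗ λ) = x ⇀ λ` and `actR (x ⊗ λ) = λ ↼ x`. -/
def actOnDual (actL actR : H ⊗[k] K →ₗ[k] K) : H ⊗[k] K →ₗ[k] K :=
  actL ∘ₗ (LinearMap.lTensor H actR) ∘ₗ
    (LinearMap.lTensor H (LinearMap.rTensor K (HopfAlgebra.antipode (R := k)))) ∘ₗ
    (TensorProduct.assoc k H H K).toLinearMap ∘ₗ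
    (LinearMap.rTensor K (TensorProduct.comm k H H).toLinearMap) ∘ₗ
    (LinearMap.rTensor K (Coalgebra.comul (R := k)))


section st19aux
open Coalgebra HopfAlgebra

variable {k}

lemma st19_sum_smul_left {a : H} (r : Coalgebra.Repr k a (H × H)) :
    ∑ i ∈ r.index, counit (R := k) (r.left i) • r.right i = a := by
  have h := congrArg (TensorProduct.lid k H) (Coalgebra.sum_counit_tmul_eq r)
  simp only [map_sum, lid_tmul, one_smul] at h
  simpa using h

lemma st19_sum_smul_right {a : H} (r : Coalgebra.Repr k a (H × H)) :
    ∑ i ∈ r.index, counit (R := k) (r.right i) • r.left i = a := by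
  have h := congrArg (TensorProduct.rid k H) (Coalgebra.sum_tmul_counit_eq r)
  simp only [map_sum, rid_tmul, one_smul] at h
  simpa using h

lemma st19_antipode_one : antipode (R := k) (1 : H) = 1 := by
  have h := HopfAlgebra.mul_antipode_rTensor_comul_apply (R := k) (A := H) 1
  simpa [Algebra.TensorProduct.one_def] using h

/-- coassoc-based collapse: `∑ γ(a₁) a₂ ⊗ a₃ = 1 ⊗ a`. -/
lemma st19_gamma_collapse {a : H} (r : Coalgebra.Repr k a (H × H))
    (rl : ∀ i, Coalgebra.Repr k (r.left i) (H × H)) (rr : ∀ i, Coalgebra.Repr k (r.right i) (H × H)) :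
    ∑ i ∈ r.index, ∑ j ∈ (rr i).index,
      (antipode (R := k) (r.left i) * (rr i).left j) ⊗ₜ[k] (rr i).right j
      = (1 : H) ⊗ₜ[k] a := by
  have h1 := Coalgebra.sum_tmul_tmul_eq r rl rr
  have h2 := congrArg (fun t => (LinearMap.rTensor H
      ((LinearMap.mul' k H) ∘ₗ TensorProduct.map (antipode (R := k)) LinearMap.id)
      ∘ₗ (TensorProduct.assoc k H H H).symm.toLinearMap) t) h1
  simp only [map_sum, coe_comp, Function.comp_apply, LinearEquiv.coe_coe, assoc_symm_tmul,
    rTensor_tmul, mul'_apply, TensorProduct.map_tmul, id_coe, id_eq] at h2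
  rw [← h2]
  have : ∀ i ∈ r.index, ∑ j ∈ (rl i).index,
      (antipode (R := k) ((rl i).left j) * (rl i).right j) ⊗ₜ[k] r.right i
      = (1 : H) ⊗ₜ[k] (counit (R := k) (r.left i) • r.right i) := by
    intro i _
    rw [← TensorProduct.sum_tmul, HopfAlgebra.sum_antipode_mul_eq_smul (rl i)]
    rw [TensorProduct.smul_tmul]
  rw [Finset.sum_congr rfl this, ← TensorProduct.tmul_sum, st19_sum_smul_left r]

variable {ι κ : Type*} in
/-- Repr of a product from Reprs of the factors. -/
@[simps index left right]
noncomputable def st19_mulRepr {a b : H} (r : Coalgebra.Repr k a ι) (s : Coalgebra.Repr k b κ) :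
    Coalgebra.Repr k (a * b) (ι × κ) where
  index := r.index ×ˢ s.index
  left := fun p => r.left p.1 * s.left p.2
  right := fun p => r.right p.1 * s.right p.2
  eq := by
    rw [Bialgebra.comul_mul, ← r.eq, ← s.eq, Finset.sum_mul_sum]
    rw [Finset.sum_product]
    simp [Algebra.TensorProduct.tmul_mul_tmul]

set_option maxHeartbeats 1000000 in
lemma st19_antipode_mul (a b : H) :
    antipode (R := k) (a * b) = antipode (R := k) b * antipode (R := k) a := by
  symm
  set G : H →ₗ[k] H := antipode (R := k) with hG
  set ra := ℛ k a; set rb := ℛ k b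
  set rla : ∀ i, Coalgebra.Repr k (ra.left i) (H × H) := fun i => ℛ k (ra.left i)
  set rra : ∀ i, Coalgebra.Repr k (ra.right i) (H × H) := fun i => ℛ k (ra.right i)
  set rlb : ∀ j, Coalgebra.Repr k (rb.left j) (H × H) := fun j => ℛ k (rb.left j)
  set rrb : ∀ j, Coalgebra.Repr k (rb.right j) (H × H) := fun j => ℛ k (rb.right j)
  have ha : (∑ i ∈ ra.index, counit (R := k) (ra.right i) • G (ra.left i)) = G a := by
    rw [show (∑ i ∈ ra.index, counit (R := k) (ra.right i) • G (ra.left i))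
        = ∑ i ∈ ra.index, G (counit (R := k) (ra.right i) • ra.left i) by simp [map_smul],
      ← map_sum, st19_sum_smul_right]
  have hb : (∑ j ∈ rb.index, counit (R := k) (rb.right j) • G (rb.left j)) = G b := by
    rw [show (∑ j ∈ rb.index, counit (R := k) (rb.right j) • G (rb.left j))
        = ∑ j ∈ rb.index, G (counit (R := k) (rb.right j) • rb.left j) by simp [map_smul],
      ← map_sum, st19_sum_smul_right]
  calc G b * G a
      = (∑ j ∈ rb.index, counit (R := k) (rb.right j) • G (rb.left j)) *
        (∑ i ∈ ra.index, counit (R := k) (ra.right i) • G (ra.left i)) := by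
        rw [ha, hb]
    _ = ∑ j ∈ rb.index, ∑ i ∈ ra.index,
          (G (rb.left j) * G (ra.left i)) *
            ((counit (R := k) (ra.right i * rb.right j)) • (1 : H)) := by
        rw [Finset.sum_mul_sum]
        refine Finset.sum_congr rfl fun j _ => Finset.sum_congr rfl fun i _ => ?_
        rw [Bialgebra.counit_mul, smul_mul_smul_comm, mul_smul_comm, mul_one,
          mul_comm (counit (R := k) (ra.right i)), mul_smul]
    _ = ∑ j ∈ rb.index, ∑ i ∈ ra.index, ∑ s ∈ (rra i).index, ∑ t ∈ (rrb j).index,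
          G (rb.left j) * ((G (ra.left i) * (rra i).left s) *
            ((rrb j).left t * G ((rra i).right s * (rrb j).right t))) := by
        refine Finset.sum_congr rfl fun j _ => Finset.sum_congr rfl fun i _ => ?_
        rw [← HopfAlgebra.sum_mul_antipode_eq_smul (st19_mulRepr (rra i) (rrb j)),
          Finset.mul_sum]
        simp only [st19_mulRepr_index, st19_mulRepr_left, st19_mulRepr_right]
        refine (Finset.sum_product _ _ _).trans ?_
        refine Finset.sum_congr rfl fun s _ => Finset.sum_congr rfl fun t _ => ?_
        simp only [mul_assoc, hG]
    _ = ∑ j ∈ rb.index, ∑ t ∈ (rrb j).index, ∑ i ∈ ra.index, ∑ s ∈ (rra i).index,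
          G (rb.left j) * ((G (ra.left i) * (rra i).left s) *
            ((rrb j).left t * G ((rra i).right s * (rrb j).right t))) := by
        refine Finset.sum_congr rfl fun j _ => ?_
        rw [Finset.sum_congr rfl (fun i (_ : i ∈ ra.index) => Finset.sum_comm (s := (rra i).index)
          (t := (rrb j).index)), Finset.sum_comm]
    _ = ∑ j ∈ rb.index, ∑ t ∈ (rrb j).index,
          G (rb.left j) * ((rrb j).left t * G (a * (rrb j).right t)) := by
        refine Finset.sum_congr rfl fun j _ => Finset.sum_congr rfl fun t _ => ?_
        have h4 := st19_gamma_collapse ra rla rra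
        have h5 := congrArg (fun z => (LinearMap.mulLeft k (G (rb.left j)))
          ((LinearMap.mul' k H)
            ((TensorProduct.map LinearMap.id
              ((LinearMap.mulLeft k ((rrb j).left t)) ∘ₗ G ∘ₗ
                (LinearMap.mulRight k ((rrb j).right t)))) z))) h4
        simp only [map_sum, TensorProduct.map_tmul, mul'_apply, coe_comp, Function.comp_apply,
          id_coe, id_eq, mulLeft_apply, mulRight_apply, one_mul] at h5
        exact h5
    _ = ∑ j ∈ rb.index, ∑ t ∈ (rrb j).index,
          (G (rb.left j) * (rrb j).left t) * G (a * (rrb j).right t) := by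
        simp only [mul_assoc]
    _ = G (a * b) := by
        have h4 := st19_gamma_collapse rb rlb rrb
        have h5 := congrArg (fun z => (LinearMap.mul' k H)
          ((TensorProduct.map LinearMap.id (G ∘ₗ (LinearMap.mulLeft k a))) z)) h4
        simp only [map_sum, TensorProduct.map_tmul, mul'_apply, coe_comp, Function.comp_apply,
          id_coe, id_eq, mulLeft_apply, one_mul] at h5
        exact h5

section ginv

variable (gi : H →ₗ[k] H)
  (hg1 : (antipode (R := k) (A := H)) ∘ₗ gi = LinearMap.id)
  (hg2 : gi ∘ₗ (antipode (R := k) (A := H)) = LinearMap.id)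

include hg1 hg2

lemma st19_ginv_mul (x y : H) : gi (x * y) = gi y * gi x := by
  have e1 : ∀ z, antipode (R := k) (gi z) = z := fun z => LinearMap.congr_fun hg1 z
  have e2 : ∀ z, gi (antipode (R := k) z) = z := fun z => LinearMap.congr_fun hg2 z
  calc gi (x * y) = gi (antipode (R := k) (gi y * gi x)) := by
        rw [st19_antipode_mul, e1, e1]
    _ = gi y * gi x := e2 _

lemma st19_ginv_one : gi (1 : H) = 1 := by
  have e2 : ∀ z, gi (antipode (R := k) z) = z := fun z => LinearMap.congr_fun hg2 z
  have h := e2 1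
  rwa [st19_antipode_one] at h

/-- `∑ γ⁻¹(a₂) a₁ = ε(a) 1`. -/
lemma st19_ginv_collapse {a : H} (r : Coalgebra.Repr k a (H × H)) :
    ∑ i ∈ r.index, gi (r.right i) * r.left i = counit (R := k) a • 1 := by
  have e1 : ∀ z, antipode (R := k) (gi z) = z := fun z => LinearMap.congr_fun hg1 z
  have e2 : ∀ z, gi (antipode (R := k) z) = z := fun z => LinearMap.congr_fun hg2 z
  have key : antipode (R := k) (∑ i ∈ r.index, gi (r.right i) * r.left i)
      = counit (R := k) a • 1 := by
    rw [map_sum]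
    rw [Finset.sum_congr rfl (fun i (_ : i ∈ r.index) => st19_antipode_mul (gi (r.right i))
      (r.left i))]
    rw [Finset.sum_congr rfl (fun i (_ : i ∈ r.index) => by rw [e1 (r.right i)] :
      ∀ i ∈ r.index, antipode (R := k) (r.left i) * antipode (R := k) (gi (r.right i))
        = antipode (R := k) (r.left i) * r.right i)]
    exact HopfAlgebra.sum_antipode_mul_eq_smul r
  calc (∑ i ∈ r.index, gi (r.right i) * r.left i)
      = gi (antipode (R := k) (∑ i ∈ r.index, gi (r.right i) * r.left i)) := (e2 _).symm
    _ = gi (counit (R := k) a • 1) := by rw [key]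
    _ = counit (R := k) a • 1 := by rw [map_smul, st19_ginv_one gi hg1 hg2]

/-- The coassociativity collapse `∑ u₁ ⊗ (γ⁻¹(u₃) u₂) ⊗ u₄ = ∑ u₁ ⊗ 1 ⊗ u₂`. -/
lemma st19_H6 {u : H} (r : Coalgebra.Repr k u (H × H))
    (rl : ∀ i, Coalgebra.Repr k (r.left i) (H × H)) (rr : ∀ i, Coalgebra.Repr k (r.right i) (H × H)) :
    ∑ i ∈ r.index, ∑ m ∈ (rl i).index, ∑ j ∈ (rr i).index,
      (rl i).left m ⊗ₜ[k] ((gi ((rr i).left j) * (rl i).right m) ⊗ₜ[k] (rr i).right j)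
    = ∑ i ∈ r.index, r.left i ⊗ₜ[k] ((1 : H) ⊗ₜ[k] r.right i) := by
  set rc : ∀ i j, Coalgebra.Repr k ((rr i).left j) (H × H) := fun i j => ℛ k ((rr i).left j)
  set rd : ∀ i j, Coalgebra.Repr k ((rr i).right j) (H × H) := fun i j => ℛ k ((rr i).right j)
  -- I2: apply id ⊗ id ⊗ Δ to the coassociativity identity
  have h1 := Coalgebra.sum_tmul_tmul_eq r rl rr
  have h2 := congrArg (fun t =>
    (LinearMap.lTensor H (LinearMap.lTensor H (Coalgebra.comul (R := k)))) t) h1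
  simp only [map_sum, lTensor_tmul] at h2
  have h2l : ∀ i ∈ r.index, ∀ m ∈ (rl i).index,
      (rl i).left m ⊗ₜ[k] ((rl i).right m ⊗ₜ[k] (Coalgebra.comul (R := k) (r.right i)))
      = ∑ j ∈ (rr i).index,
          (rl i).left m ⊗ₜ[k] ((rl i).right m ⊗ₜ[k] ((rr i).left j ⊗ₜ[k] (rr i).right j)) := by
    intro i _ m _
    rw [← (rr i).eq, TensorProduct.tmul_sum, TensorProduct.tmul_sum]
  have h2r : ∀ i ∈ r.index, ∀ j ∈ (rr i).index,
      r.left i ⊗ₜ[k] ((rr i).left j ⊗ₜ[k] (Coalgebra.comul (R := k) ((rr i).right j)))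
      = ∑ l ∈ (rd i j).index,
          r.left i ⊗ₜ[k] ((rr i).left j ⊗ₜ[k] ((rd i j).left l ⊗ₜ[k] (rd i j).right l)) := by
    intro i _ j _
    rw [← (rd i j).eq, TensorProduct.tmul_sum, TensorProduct.tmul_sum]
  rw [Finset.sum_congr rfl (fun i hi => Finset.sum_congr rfl (fun m hm => h2l i hi m hm)),
    Finset.sum_congr rfl (fun i hi => Finset.sum_congr rfl (fun j hj => h2r i hi j hj))] at h2
  -- I3': coassociativity inside each b-leg, tensored with the a-leg
  have h3 : ∀ i ∈ r.index,
      ∑ j ∈ (rr i).index, ∑ l ∈ (rc i j).index,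
        r.left i ⊗ₜ[k] ((rc i j).left l ⊗ₜ[k] ((rc i j).right l ⊗ₜ[k] (rr i).right j))
      = ∑ j ∈ (rr i).index, ∑ l ∈ (rd i j).index,
        r.left i ⊗ₜ[k] ((rr i).left j ⊗ₜ[k] ((rd i j).left l ⊗ₜ[k] (rd i j).right l)) := by
    intro i _
    have hco := Coalgebra.sum_tmul_tmul_eq (rr i) (rc i) (rd i)
    have := congrArg (fun t => (TensorProduct.mk k H (H ⊗[k] (H ⊗[k] H)) (r.left i)) t) hco
    simpa only [map_sum, TensorProduct.mk_apply] using this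
  rw [← Finset.sum_congr rfl h3] at h2
  -- now apply Ω
  have h4 := congrArg (fun t => (LinearMap.lTensor H
      ((LinearMap.rTensor H ((LinearMap.mul' k H) ∘ₗ (TensorProduct.map gi LinearMap.id) ∘ₗ
        (TensorProduct.comm k H H).toLinearMap)) ∘ₗ
        (TensorProduct.assoc k H H H).symm.toLinearMap)) t) h2
  simp only [map_sum, lTensor_tmul, coe_comp, Function.comp_apply, LinearEquiv.coe_coe,
    assoc_symm_tmul, rTensor_tmul, comm_tmul, TensorProduct.map_tmul, mul'_apply,
    id_coe, id_eq] at h4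
  rw [h4]
  refine Finset.sum_congr rfl fun i _ => ?_
  have inner : ∀ j ∈ (rr i).index,
      ∑ l ∈ (rc i j).index,
        r.left i ⊗ₜ[k] ((gi ((rc i j).right l) * (rc i j).left l) ⊗ₜ[k] (rr i).right j)
      = counit (R := k) ((rr i).left j) •
          (r.left i ⊗ₜ[k] ((1 : H) ⊗ₜ[k] (rr i).right j)) := by
    intro j _
    rw [← TensorProduct.tmul_sum, ← TensorProduct.sum_tmul,
      st19_ginv_collapse gi hg1 hg2 (rc i j)]
    simp only [TensorProduct.smul_tmul, TensorProduct.tmul_smul]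
  rw [Finset.sum_congr rfl inner]
  rw [show ∑ j ∈ (rr i).index, counit (R := k) ((rr i).left j) •
      (r.left i ⊗ₜ[k] ((1 : H) ⊗ₜ[k] (rr i).right j))
    = r.left i ⊗ₜ[k] ((1 : H) ⊗ₜ[k]
        (∑ j ∈ (rr i).index, counit (R := k) ((rr i).left j) • (rr i).right j)) by
    rw [TensorProduct.tmul_sum, TensorProduct.tmul_sum]
    exact Finset.sum_congr rfl fun j _ => by rw [TensorProduct.tmul_smul, TensorProduct.tmul_smul]]
  rw [st19_sum_smul_left (rr i)]

end ginv

end st19aux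

theorem statement19
    -- the canonical Hopf pairing between `K = H*` and `H`:
    (pair : K →ₗ[k] H →ₗ[k] k)
    (pair_mulK : (TensorProduct.lift pair) ∘ₗ (LinearMap.rTensor H (LinearMap.mul' k K))
      = (LinearMap.mul' k k) ∘ₗ
          (TensorProduct.map (TensorProduct.lift pair) (TensorProduct.lift pair)) ∘ₗ
          (TensorProduct.tensorTensorTensorComm k K K H H).toLinearMap ∘ₗ
          (LinearMap.lTensor (K ⊗[k] K) (Coalgebra.comul (R := k))))
    (pair_mulH : (TensorProduct.lift pair) ∘ₗ (LinearMap.lTensor K (LinearMap.mul' k H))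
      = (LinearMap.mul' k k) ∘ₗ
          (TensorProduct.map (TensorProduct.lift pair) (TensorProduct.lift pair)) ∘ₗ
          (TensorProduct.tensorTensorTensorComm k K K H H).toLinearMap ∘ₗ
          (LinearMap.rTensor (H ⊗[k] H) (Coalgebra.comul (R := k))))
    (pair_one : ∀ x : H, pair 1 x = Coalgebra.counit (R := k) x)
    (pair_one' : ∀ lam : K, pair lam 1 = Coalgebra.counit (R := k) lam)
    (pair_antipode : ∀ (lam : K) (x : H),
      pair (HopfAlgebra.antipode (R := k) lam) x = pair lam (HopfAlgebra.antipode (R := k) x))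
    (pair_nondeg : (∀ lam : K, (∀ x : H, pair lam x = 0) → lam = 0) ∧
      (∀ x : H, (∀ lam : K, pair lam x = 0) → x = 0))
    -- the antipodes are invertible:
    (γHinv : H →ₗ[k] H)
    (hγH : (HopfAlgebra.antipode (R := k) (A := H)) ∘ₗ γHinv = LinearMap.id ∧
      γHinv ∘ₗ (HopfAlgebra.antipode (R := k) (A := H)) = LinearMap.id)
    (γKinv : K →ₗ[k] K)
    (hγK : (HopfAlgebra.antipode (R := k) (A := K)) ∘ₗ γKinv = LinearMap.id ∧
      γKinv ∘ₗ (HopfAlgebra.antipode (R := k) (A := K)) = LinearMap.id)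
    -- the coregular actions `⟨x ⇀ λ, y⟩ = ⟨λ, yx⟩` and `⟨λ ↼ x, y⟩ = ⟨λ, xy⟩`:
    (actL actR : H ⊗[k] K →ₗ[k] K)
    (hactL : ∀ (x y : H) (lam : K), pair (actL (x ⊗ₜ[k] lam)) y = pair lam (y * x))
    (hactR : ∀ (x y : H) (lam : K), pair (actR (x ⊗ₜ[k] lam)) y = pair lam (x * y)) :
    -- invariance of `(h, x) = ⟨γ⁻¹(h), x⟩` under the diagonal action:
    (TensorProduct.lift (pair ∘ₗ γKinv)) ∘ₗ
        (TensorProduct.map (actOnDual k actL actR) (adjAction k H)) ∘ₗ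
        (TensorProduct.tensorTensorTensorComm k H H K H).toLinearMap ∘ₗ
        (LinearMap.rTensor (K ⊗[k] H) (Coalgebra.comul (R := k)))
      = (TensorProduct.lift (pair ∘ₗ γKinv)) ∘ₗ
          (TensorProduct.lid k (K ⊗[k] H)).toLinearMap ∘ₗ
          (LinearMap.rTensor (K ⊗[k] H) (Coalgebra.counit (R := k))) := by
  have eH1 : ∀ z, HopfAlgebra.antipode (R := k) (γHinv z) = z :=
    fun z => LinearMap.congr_fun hγH.1 z
  have eH2 : ∀ z, γHinv (HopfAlgebra.antipode (R := k) z) = z :=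
    fun z => LinearMap.congr_fun hγH.2 z
  have eK1 : ∀ z, HopfAlgebra.antipode (R := k) (γKinv z) = z :=
    fun z => LinearMap.congr_fun hγK.1 z
  have pairGinv : ∀ (lam : K) (y : H), pair (γKinv lam) y = pair lam (γHinv y) := by
    intro lam y
    have hp := pair_antipode (γKinv lam) (γHinv y)
    rw [eK1 lam, eH1 y] at hp
    exact hp.symm
  apply TensorProduct.ext'
  intro u z
  induction z using TensorProduct.induction_on with
  | zero => rw [TensorProduct.tmul_zero, map_zero, map_zero]
  | add z₁ z₂ ih₁ ih₂ => rw [TensorProduct.tmul_add, map_add, map_add, ih₁, ih₂]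
  | tmul h x =>
  set r := Coalgebra.Repr.arbitrary k u with hr
  set rl : ∀ i, Coalgebra.Repr k (r.left i) (H × H) := fun i => Coalgebra.Repr.arbitrary k (r.left i) with hrl
  set rr : ∀ i, Coalgebra.Repr k (r.right i) (H × H) := fun i => Coalgebra.Repr.arbitrary k (r.right i) with hrr
  -- evaluate the right-hand side
  have hRHS : ((TensorProduct.lift (pair ∘ₗ γKinv)) ∘ₗ
      (TensorProduct.lid k (K ⊗[k] H)).toLinearMap ∘ₗ
      (LinearMap.rTensor (K ⊗[k] H) (Coalgebra.counit (R := k)))) (u ⊗ₜ[k] (h ⊗ₜ[k] x))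
      = Coalgebra.counit (R := k) u • pair h (γHinv x) := by
    simp only [coe_comp, Function.comp_apply, rTensor_tmul, LinearEquiv.coe_coe, lid_tmul,
      map_smul, lift.tmul, smul_eq_mul]
    rw [pairGinv]
  rw [hRHS]
  -- evaluate the left-hand side
  have hcom : (LinearMap.rTensor (K ⊗[k] H) (Coalgebra.comul (R := k))) (u ⊗ₜ[k] (h ⊗ₜ[k] x))
      = ∑ i ∈ r.index, (r.left i ⊗ₜ[k] r.right i) ⊗ₜ[k] (h ⊗ₜ[k] x) := by
    rw [rTensor_tmul, ← r.eq, TensorProduct.sum_tmul]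
  have hL1 : ((TensorProduct.lift (pair ∘ₗ γKinv)) ∘ₗ
      (TensorProduct.map (actOnDual k actL actR) (adjAction k H)) ∘ₗ
      (TensorProduct.tensorTensorTensorComm k H H K H).toLinearMap ∘ₗ
      (LinearMap.rTensor (K ⊗[k] H) (Coalgebra.comul (R := k)))) (u ⊗ₜ[k] (h ⊗ₜ[k] x))
      = ∑ i ∈ r.index, pair (γKinv (actOnDual k actL actR (r.left i ⊗ₜ[k] h)))
          (adjAction k H (r.right i ⊗ₜ[k] x)) := by
    simp only [coe_comp, Function.comp_apply]
    rw [hcom]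
    simp only [map_sum, LinearEquiv.coe_coe, tensorTensorTensorComm_tmul,
      TensorProduct.map_tmul, lift.tmul, coe_comp, Function.comp_apply]
  rw [hL1]
  -- evaluate the adjoint action composed with γ⁻¹
  have adjEv : ∀ i, γHinv (adjAction k H (r.right i ⊗ₜ[k] x))
      = ∑ j ∈ (rr i).index, (rr i).right j * (γHinv x * γHinv ((rr i).left j)) := by
    intro i
    have h1 : adjAction k H (r.right i ⊗ₜ[k] x)
        = ∑ j ∈ (rr i).index,
            (rr i).left j * (x * HopfAlgebra.antipode (R := k) ((rr i).right j)) := by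
      have hcom2 : (LinearMap.rTensor H (Coalgebra.comul (R := k))) (r.right i ⊗ₜ[k] x)
          = ∑ j ∈ (rr i).index, ((rr i).left j ⊗ₜ[k] (rr i).right j) ⊗ₜ[k] x := by
        rw [rTensor_tmul, ← (rr i).eq, TensorProduct.sum_tmul]
      simp only [adjAction, coe_comp, Function.comp_apply]
      rw [hcom2]
      simp only [map_sum, LinearEquiv.coe_coe, assoc_tmul, lTensor_tmul, comm_tmul, mul'_apply,
        coe_comp, Function.comp_apply]
    rw [h1, map_sum]
    refine Finset.sum_congr rfl fun j _ => ?_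
    rw [st19_ginv_mul γHinv hγH.1 hγH.2, st19_ginv_mul γHinv hγH.1 hγH.2, eH2, mul_assoc]
  -- evaluate the dual action paired against any element
  have actEv : ∀ i (y : H), pair (actOnDual k actL actR (r.left i ⊗ₜ[k] h)) y
      = ∑ m ∈ (rl i).index,
          pair h (HopfAlgebra.antipode (R := k) ((rl i).left m) * (y * (rl i).right m)) := by
    intro i y
    have h1 : actOnDual k actL actR (r.left i ⊗ₜ[k] h)
        = ∑ m ∈ (rl i).index, actL ((rl i).right m ⊗ₜ[k]
            actR (HopfAlgebra.antipode (R := k) ((rl i).left m) ⊗ₜ[k] h)) := by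
      have hcom3 : (LinearMap.rTensor K (Coalgebra.comul (R := k))) (r.left i ⊗ₜ[k] h)
          = ∑ m ∈ (rl i).index, ((rl i).left m ⊗ₜ[k] (rl i).right m) ⊗ₜ[k] h := by
        rw [rTensor_tmul, ← (rl i).eq, TensorProduct.sum_tmul]
      simp only [actOnDual, coe_comp, Function.comp_apply]
      rw [hcom3]
      simp only [map_sum, rTensor_tmul, LinearEquiv.coe_coe, comm_tmul, assoc_tmul, lTensor_tmul,
        coe_comp, Function.comp_apply]
    rw [h1, map_sum]
    rw [LinearMap.coe_sum, Finset.sum_apply]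
    refine Finset.sum_congr rfl fun m _ => ?_
    rw [hactL, hactR]
  -- main computation
  calc ∑ i ∈ r.index, pair (γKinv (actOnDual k actL actR (r.left i ⊗ₜ[k] h)))
        (adjAction k H (r.right i ⊗ₜ[k] x))
      = ∑ i ∈ r.index, ∑ m ∈ (rl i).index, ∑ j ∈ (rr i).index,
          pair h (HopfAlgebra.antipode (R := k) ((rl i).left m) *
            (((rr i).right j * (γHinv x * γHinv ((rr i).left j))) * (rl i).right m)) := by
        refine Finset.sum_congr rfl fun i _ => ?_
        rw [pairGinv, adjEv i, actEv i]
        refine Finset.sum_congr rfl fun m _ => ?_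
        rw [Finset.sum_mul, Finset.mul_sum, map_sum]
    _ = ∑ i ∈ r.index, ∑ m ∈ (rl i).index, ∑ j ∈ (rr i).index,
          pair h (HopfAlgebra.antipode (R := k) ((rl i).left m) *
            ((rr i).right j * (γHinv x * (γHinv ((rr i).left j) * (rl i).right m)))) := by
        refine Finset.sum_congr rfl fun i _ => Finset.sum_congr rfl fun m _ =>
          Finset.sum_congr rfl fun j _ => ?_
        simp only [mul_assoc]
    _ = ∑ i ∈ r.index,
          pair h (HopfAlgebra.antipode (R := k) (r.left i) * (r.right i * (γHinv x * 1))) := by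
        have h6 := st19_H6 γHinv hγH.1 hγH.2 r rl rr
        have hmap := congrArg (fun t => ((pair h) ∘ₗ (LinearMap.mul' k H) ∘ₗ
          (TensorProduct.map (HopfAlgebra.antipode (R := k))
            ((LinearMap.mul' k H) ∘ₗ (TensorProduct.comm k H H).toLinearMap ∘ₗ
              (LinearMap.rTensor H (LinearMap.mulLeft k (γHinv x)))))) t) h6
        simp only [map_sum, coe_comp, Function.comp_apply, TensorProduct.map_tmul,
          rTensor_tmul, mulLeft_apply, LinearEquiv.coe_coe, comm_tmul, mul'_apply] at hmap
        exact hmap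
    _ = Coalgebra.counit (R := k) u • pair h (γHinv x) := by
        have hm := congrArg (fun z => (pair h) ((LinearMap.mulRight k (γHinv x)) z))
          (HopfAlgebra.sum_antipode_mul_eq_smul r)
        simp only [map_sum, mulRight_apply, smul_mul_assoc, one_mul, map_smul,
          smul_eq_mul] at hm
        calc ∑ i ∈ r.index, pair h (HopfAlgebra.antipode (R := k) (r.left i) *
              (r.right i * (γHinv x * 1)))
            = ∑ i ∈ r.index, pair h (HopfAlgebra.antipode (R := k) (r.left i) *
                r.right i * γHinv x) := by
              refine Finset.sum_congr rfl fun i _ => ?_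
              rw [mul_one, ← mul_assoc]
          _ = Coalgebra.counit (R := k) u • pair h (γHinv x) := by
              rw [smul_eq_mul]
              exact hm

end
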